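/- Let p be an odd prime not dividing Q, and let V be the companion Lucas sequence with parameters P = √R (R an integer coprime to Q) and Q. Then V_p = √R · W for an integer W, and W ≡ (R/p) (mod p), where (R/p) is the Legendre symbol. Equivalently, V_p ≡ R^((p-1)/2)·√R (mod p) in ℤ[√R]. -/

import Mathlib

/-- The companion Lucas sequence with parameters `P = √R`, `Q` in `ℤ[√R]`. -/
def lucasV (R Q : ℤ) : ℕ → Zsqrtd R
  | 0 => 2
  | 1 => Zsqrtd.sqrtd
  | n + 2 => Zsqrtd.sqrtd * lucasV R Q (n + 1) - (Q : Zsqrtd R) * lucasV R Q n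

open Polynomial

lemma lucasV_add_two (R Q : ℤ) (n : ℕ) :
    lucasV R Q (n + 2)
      = Zsqrtd.sqrtd * lucasV R Q (n + 1) - (Q : Zsqrtd R) * lucasV R Q n := rfl

/-- Parity structure of the companion Lucas sequence. -/
lemma lucasV_parity (R Q : ℤ) : ∀ k : ℕ,
    (lucasV R Q (2 * k)).im = 0 ∧ (lucasV R Q (2 * k + 1)).re = 0 := by
  intro k
  induction k with
  | zero => simp [lucasV]
  | succ k ih =>
    obtain ⟨h1, h2⟩ := ih
    have e1 : 2 * (k + 1) = (2 * k) + 2 := by ring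
    have e2 : 2 * (k + 1) + 1 = (2 * k + 1) + 2 := by ring
    have him : (lucasV R Q (2 * (k + 1))).im = 0 := by
      rw [e1, lucasV_add_two]
      simp [Zsqrtd.im_mul, h1, h2]
    refine ⟨him, ?_⟩
    have him' : (lucasV R Q (2 * k + 2)).im = 0 := by rw [e1] at him; exact him
    rw [e2, lucasV_add_two]
    simp [Zsqrtd.re_mul, him', h2]

/-- The key congruence: `V_p ≡ (√R)^p mod p` in `ℤ[√R]`. -/
lemma lucasV_prime_congr (R Q : ℤ) (p : ℕ) (hp : p.Prime) :
    ∃ c : Zsqrtd R, Zsqrtd.sqrtd ^ p - lucasV R Q p = (p : Zsqrtd R) * c := by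
  set S := Zsqrtd R
  set g : S[X] := X ^ 2 + (C (-(Zsqrtd.sqrtd : S)) * X + C (Q : S)) with hg_def
  have hlin : (C (-(Zsqrtd.sqrtd : S)) * X + C (Q : S)).degree < 2 :=
    lt_of_le_of_lt (degree_linear_le) (by norm_num)
  have hg : g.Monic := monic_X_pow_add hlin
  set A := AdjoinRoot g
  set φ : S →+* A := AdjoinRoot.of g with hφ
  set α : A := AdjoinRoot.root g with hα
  set β : A := φ Zsqrtd.sqrtd - α with hβ
  -- the root relation
  have hroot : α ^ 2 = φ Zsqrtd.sqrtd * α - φ (Q : S) := by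
    have h0 : AdjoinRoot.mk g g = 0 := AdjoinRoot.mk_self
    rw [hg_def] at h0
    simp only [map_add, map_mul, map_pow, AdjoinRoot.mk_X, AdjoinRoot.mk_C, map_neg] at h0
    have h0' : α ^ 2 + (-(φ Zsqrtd.sqrtd) * α + φ (Q : S)) = 0 := h0
    linear_combination h0'
  have hsum : α + β = φ Zsqrtd.sqrtd := by rw [hβ]; ring
  have hmul : α * β = φ (Q : S) := by
    rw [hβ, mul_sub, ← sq, hroot]; ring
  -- closed form for lucasV
  have key : ∀ n : ℕ, φ (lucasV R Q n) = α ^ n + β ^ n ∧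
      φ (lucasV R Q (n + 1)) = α ^ (n + 1) + β ^ (n + 1) := by
    intro n
    induction n with
    | zero =>
      constructor
      · show φ (2 : S) = _
        rw [show (2 : S) = 1 + 1 by norm_num, map_add, map_one]
        simp
      · show φ Zsqrtd.sqrtd = _
        rw [← hsum]; ring
    | succ n ih =>
      obtain ⟨ih1, ih2⟩ := ih
      refine ⟨ih2, ?_⟩
      rw [lucasV_add_two, map_sub, map_mul, map_mul, ih1, ih2, ← hsum, ← hmul]
      ring
  -- Frobenius-style congruence
  obtain ⟨r, hr⟩ : ∃ r : A, (α + β) ^ p = α ^ p + β ^ p + (p : A) * r := by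
    obtain ⟨r, hr⟩ := exists_add_pow_prime_eq hp α β
    exact ⟨α * β * r, by rw [hr]; ring⟩
  rw [hsum] at hr
  have hmain : φ (Zsqrtd.sqrtd ^ p - lucasV R Q p) = (p : A) * r := by
    rw [map_sub, map_pow, hr, (key p).1]; ring
  -- descent to S using modByMonicHom
  have hdeg2 : g.degree = 2 := by
    rw [hg_def, degree_add_eq_left_of_degree_lt (by simpa using hlin), degree_X_pow]
    rfl
  have hdeg : (C (Zsqrtd.sqrtd ^ p - lucasV R Q p : S)).degree < g.degree := by
    rw [hdeg2]
    exact lt_of_le_of_lt degree_C_le (by norm_num)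
  set x : S := Zsqrtd.sqrtd ^ p - lucasV R Q p with hx
  refine ⟨(AdjoinRoot.modByMonicHom hg r).coeff 0, ?_⟩
  have h1 : AdjoinRoot.modByMonicHom hg (φ x) = C x := by
    have hxA : φ x = AdjoinRoot.mk g (C x) := (AdjoinRoot.mk_C x).symm
    rw [hxA, AdjoinRoot.modByMonicHom_mk, (modByMonic_eq_self_iff hg).mpr hdeg]
  have h2 : AdjoinRoot.modByMonicHom hg ((p : A) * r)
      = (p : S[X]) * AdjoinRoot.modByMonicHom hg r := by
    have hps : (p : A) * r = (p : ℕ) • r := by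
      rw [nsmul_eq_mul]
    rw [hps, map_nsmul, nsmul_eq_mul]
  have hfin := h1.symm.trans (by rw [hmain, h2])
  have hcoeff := congrArg (fun q => q.coeff 0) hfin
  simpa using hcoeff

theorem lucas_V_p_eq_legendre (R Q : ℤ) (hRQ : IsCoprime R Q)
    (p : ℕ) (hp : p.Prime) (hodd : Odd p) (hpQ : ¬ ((p : ℤ) ∣ Q)) :
    ∃ W : ℤ, lucasV R Q p = (W : Zsqrtd R) * Zsqrtd.sqrtd ∧
      W ≡ @legendreSym p ⟨hp⟩ R [ZMOD (p : ℤ)] := by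
  haveI : Fact p.Prime := ⟨hp⟩
  obtain ⟨m, hm⟩ := hodd
  refine ⟨(lucasV R Q p).im, ?_, ?_⟩
  · have hre : (lucasV R Q p).re = 0 := by
      have := (lucasV_parity R Q m).2
      rwa [show 2 * m + 1 = p by omega] at this
    ext <;> simp [Zsqrtd.re_mul, Zsqrtd.im_mul, hre]
  · obtain ⟨c, hc⟩ := lucasV_prime_congr R Q p hp
    have hsq : (Zsqrtd.sqrtd : Zsqrtd R) ^ 2 = (R : Zsqrtd R) := by
      rw [sq]; exact Zsqrtd.dmuld
    have hpow : (Zsqrtd.sqrtd : Zsqrtd R) ^ p = ((R ^ m : ℤ) : Zsqrtd R) * Zsqrtd.sqrtd := by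
      rw [hm, pow_add, pow_mul, pow_one, hsq]
      push_cast
      ring
    have him := congrArg Zsqrtd.im hc
    rw [hpow] at him
    simp only [Zsqrtd.im_sub, Zsqrtd.im_mul, Zsqrtd.re_intCast, Zsqrtd.im_intCast,
      Zsqrtd.re_sqrtd, Zsqrtd.im_sqrtd, Zsqrtd.re_natCast, Zsqrtd.im_natCast,
      mul_one, mul_zero, add_zero, zero_mul, zero_add] at him
    -- him : R ^ m - (lucasV R Q p).im = p * c.im
    have h1 : (lucasV R Q p).im ≡ R ^ m [ZMOD (p : ℤ)] := by
      exact (Int.ModEq.symm (Int.modEq_iff_dvd.mpr ⟨c.im, by linarith [him]⟩)).symm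
    refine h1.trans ?_
    have h2 : ((R ^ m : ℤ) : ZMod p) = ((legendreSym p R : ℤ) : ZMod p) := by
      rw [legendreSym.eq_pow]
      push_cast
      rw [show p / 2 = m by omega]
    exact (ZMod.intCast_eq_intCast_iff _ _ _).mp h2
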